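/- Let A be a T-brace and let n be a natural number. Then for every a ∈ ζ_n(⋆,A), the subbrace br(a) generated by a is an ideal of A. -/
import Mathlib


/-!
Basic theory of left braces (skew left braces of abelian type), following
Dixon–Kurdachenko–Subbotin, "On the structure of braces whose subideals are ideals".
-/

universe u v

/-- A left brace: an abelian group `(A,+)`, a group `(A,·)`, satisfying
`a(b+c) = ab + ac - a`.  (The additive and multiplicative identities then coincide.) -/
class LeftBrace (A : Type u) extends AddCommGroup A, Group A where
  mul_add_eq : ∀ a b c : A, a * (b + c) = a * b + a * c - a

namespace LeftBrace

variable {A : Type u} [LeftBrace A]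

/-- The star operation `a ⋆ b = ab - a - b`. -/
def bstar (a b : A) : A := a * b - a - b

/-- A subset of a left brace is a subbrace if it is closed under the additive-group
and multiplicative-group operations (equivalently, it is a left brace under the
restricted operations). -/
structure IsSubbrace (S : Set A) : Prop where
  zero_mem : (0 : A) ∈ S
  add_mem : ∀ {a b : A}, a ∈ S → b ∈ S → a + b ∈ S
  neg_mem : ∀ {a : A}, a ∈ S → -a ∈ S
  mul_mem : ∀ {a b : A}, a ∈ S → b ∈ S → a * b ∈ S
  inv_mem : ∀ {a : A}, a ∈ S → a⁻¹ ∈ S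

/-- `I` is an ideal of the subbrace `J`: `I ⊆ J`, both are subbraces, and
`a ⋆ z, z ⋆ a ∈ I` for all `a ∈ J`, `z ∈ I`. -/
structure IsIdealIn (I J : Set A) : Prop where
  subset : I ⊆ J
  subbrace : IsSubbrace I
  ambient_subbrace : IsSubbrace J
  star_mem_left : ∀ a ∈ J, ∀ z ∈ I, bstar a z ∈ I
  star_mem_right : ∀ a ∈ J, ∀ z ∈ I, bstar z a ∈ I

/-- `I` is an ideal of the brace `A`. -/
def IsIdeal (I : Set A) : Prop := IsIdealIn I (Set.univ : Set A)

/-- `A` is a T-brace if being an ideal is a transitive relation: an ideal of an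
ideal of `A` is an ideal of `A`. -/
def IsTBrace (A : Type u) [LeftBrace A] : Prop :=
  ∀ I J : Set A, IsIdealIn I J → IsIdeal J → IsIdeal I

/-- The `⋆`-center `ζ(⋆,A) = {a | a ⋆ x = x ⋆ a = 0 for all x}`. -/
def starCenter (A : Type u) [LeftBrace A] : Set A :=
  {a : A | ∀ x : A, bstar a x = 0 ∧ bstar x a = 0}

/-- The preimage in `A` of the `⋆`-center of the quotient of `A` by (the ideal) `S`:
`a` belongs to it iff `a ⋆ x ∈ S` and `x ⋆ a ∈ S` for every `x ∈ A`. -/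
def nextCenter (A : Type u) [LeftBrace A] (S : Set A) : Set A :=
  {a : A | ∀ x : A, bstar a x ∈ S ∧ bstar x a ∈ S}

/-- The upper `⋆`-central series, indexed by naturals:
`ζ₀(⋆,A) = 0` and `ζ_{n+1}(⋆,A)/ζ_n(⋆,A) = ζ(⋆, A/ζ_n(⋆,A))`. -/
def zetaNat (A : Type u) [LeftBrace A] : ℕ → Set A
  | 0 => ({0} : Set A)
  | n + 1 => nextCenter A (zetaNat A n)

/-- The upper `⋆`-central series, indexed by ordinals (unions at limit ordinals). -/
noncomputable def zetaOrd (A : Type u) [LeftBrace A] (o : Ordinal.{v}) : Set A :=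
  Ordinal.limitRecOn o (({0} : Set A))
    (fun _ ih => nextCenter A ih)
    (fun o _ ih => ⋃ (o' : Ordinal) (h : o' < o), ih o' h)

/-- The upper `⋆`-hypercenter `ζ_∞(⋆,A)`: the final (stable) term of the upper
`⋆`-central series, i.e. the union of all its terms. -/
noncomputable def starHypercenter (A : Type u) [LeftBrace A] : Set A :=
  ⋃ o : Ordinal.{u}, zetaOrd A o

/-- `A` is `⋆`-hypercentral if `A = ζ_γ(⋆,A)` for some ordinal `γ`. -/
def IsStarHypercentral (A : Type u) [LeftBrace A] : Prop :=
  ∃ γ : Ordinal.{u}, zetaOrd A γ = (Set.univ : Set A)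

/-- `K ⋆ L`: the additive subgroup of `(A,+)` generated by all `x ⋆ y`, `x ∈ K`, `y ∈ L`. -/
def setStar (K L : Set A) : AddSubgroup A :=
  AddSubgroup.closure {z : A | ∃ x ∈ K, ∃ y ∈ L, z = bstar x y}

/-- `rightStarSeries A n = A^{(n+1)}`, where `A^{(1)} = A` and `A^{(n+1)} = A^{(n)} ⋆ A`. -/
def rightStarSeries (A : Type u) [LeftBrace A] : ℕ → Set A
  | 0 => (Set.univ : Set A)
  | n + 1 => ((setStar (rightStarSeries A n) (Set.univ : Set A) : AddSubgroup A) : Set A)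

/-- `leftStarSeries A n = A^{n+1}`, where `A^1 = A` and `A^{n+1} = A ⋆ A^n`. -/
def leftStarSeries (A : Type u) [LeftBrace A] : ℕ → Set A
  | 0 => (Set.univ : Set A)
  | n + 1 => ((setStar (Set.univ : Set A) (leftStarSeries A n) : AddSubgroup A) : Set A)

/-- `A` is Smoktunowicz-nilpotent if `A^{(n)} = A^k = 0` for some naturals `n, k`. -/
def IsSmoktunowiczNilpotent (A : Type u) [LeftBrace A] : Prop :=
  ∃ n k : ℕ, rightStarSeries A n = ({0} : Set A) ∧ leftStarSeries A k = ({0} : Set A)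

/-- The subbrace generated by a subset `M`: the intersection of all subbraces containing `M`. -/
def braceClosure (M : Set A) : Set A := ⋂₀ {S : Set A | IsSubbrace S ∧ M ⊆ S}

end LeftBrace

namespace LeftBrace

variable {A : Type u} [LeftBrace A]

lemma mul_zero' (a : A) : a * 0 = a := by
  have h := mul_add_eq a 0 0
  rw [add_zero, add_sub_assoc] at h
  nth_rewrite 1 [← add_zero (a * 0)] at h
  have h2 := add_left_cancel h
  exact (sub_eq_zero.mp h2.symm)

lemma one_eq_zero : (1 : A) = 0 := by
  have h := mul_zero' (1 : A); rw [one_mul] at h; exact h.symm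

lemma zero_mul' (a : A) : 0 * a = a := by rw [← one_eq_zero, one_mul]

lemma mul_neg' (a b : A) : a * (-b) = a + a - a * b := by
  have h := mul_add_eq a b (-b)
  rw [add_neg_cancel, mul_zero'] at h
  rw [eq_sub_iff_add_eq] at h ⊢
  rw [add_comm]
  exact h.symm

lemma bstar_add (a b c : A) : bstar a (b + c) = bstar a b + bstar a c := by
  simp only [bstar, mul_add_eq]; abel

lemma bstar_zero (a : A) : bstar a 0 = 0 := by simp [bstar, mul_zero']

lemma zero_bstar (a : A) : bstar 0 a = 0 := by simp [bstar, zero_mul']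

lemma bstar_neg (a b : A) : bstar a (-b) = -bstar a b := by
  simp only [bstar, mul_neg']; abel

lemma bstar_sub (a b c : A) : bstar a (b - c) = bstar a b - bstar a c := by
  rw [sub_eq_add_neg, bstar_add, bstar_neg, ← sub_eq_add_neg]

lemma mul_bstar (a b x : A) :
    bstar (a * b) x = bstar a (bstar b x) + bstar b x + bstar a x := by
  simp only [bstar, sub_eq_add_neg, mul_add_eq, mul_neg', mul_assoc]
  abel

lemma IsSubbrace.sub_mem {S : Set A} (hS : IsSubbrace S) {a b : A}
    (ha : a ∈ S) (hb : b ∈ S) : a - b ∈ S := by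
  rw [sub_eq_add_neg]; exact hS.add_mem ha (hS.neg_mem hb)

lemma IsSubbrace.bstar_mem {S : Set A} (hS : IsSubbrace S) {a b : A}
    (ha : a ∈ S) (hb : b ∈ S) : bstar a b ∈ S :=
  hS.sub_mem (hS.sub_mem (hS.mul_mem ha hb) ha) hb

lemma IsIdeal.star_left {Z : Set A} (hZ : IsIdeal Z) (a : A) {z : A} (hz : z ∈ Z) :
    bstar a z ∈ Z := hZ.star_mem_left a (Set.mem_univ a) z hz

lemma IsIdeal.star_right {Z : Set A} (hZ : IsIdeal Z) (a : A) {z : A} (hz : z ∈ Z) :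
    bstar z a ∈ Z := hZ.star_mem_right a (Set.mem_univ a) z hz

lemma exists_mul_of_sub_mem {Z : Set A} (hZ : IsIdeal Z) {s t : A} (h : s - t ∈ Z) :
    ∃ z ∈ Z, s = t * z := by
  refine ⟨bstar t⁻¹ (s - t) + (s - t),
    hZ.subbrace.add_mem (hZ.star_left t⁻¹ h) h, ?_⟩
  have h1 : bstar t⁻¹ (s - t) + (s - t) = t⁻¹ * (s - t) - t⁻¹ := by
    simp only [bstar]; abel
  rw [h1, sub_eq_add_neg, mul_add_eq, mul_neg', ← mul_assoc, mul_inv_cancel,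
    one_eq_zero, zero_mul']
  abel

lemma Z_subset_nextCenter {Z : Set A} (hZ : IsIdeal Z) : Z ⊆ nextCenter A Z :=
  fun z hz x => ⟨hZ.star_right x hz, hZ.star_left x hz⟩

/-- left congruence: if `s - t` lies in an ideal `W` contained in `nextCenter A Z`,
then `s ⋆ x ≡ t ⋆ x (mod Z)`. -/
lemma star_congr_left {Z W : Set A} (hZ : IsIdeal Z) (hW : IsIdeal W)
    (hWZ : W ⊆ nextCenter A Z) {s t : A} (x : A) (h : s - t ∈ W) :
    bstar s x - bstar t x ∈ Z := by
  obtain ⟨z, hzW, rfl⟩ := exists_mul_of_sub_mem hW h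
  rw [mul_bstar]
  have e : bstar t (bstar z x) + bstar z x + bstar t x - bstar t x
      = bstar t (bstar z x) + bstar z x := by abel
  rw [e]
  exact hZ.subbrace.add_mem (hZ.star_left t (hWZ hzW x).1) (hWZ hzW x).1

lemma star_congr_right {Z : Set A} (_hZ : IsIdeal Z) {s t : A} (x : A)
    (h : s - t ∈ nextCenter A Z) :
    bstar x s - bstar x t ∈ Z := by
  rw [← bstar_sub]
  exact (h x).2

lemma isIdeal_nextCenter {Z : Set A} (hZ : IsIdeal Z) : IsIdeal (nextCenter A Z) := by
  have hsubZ := hZ.subbrace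
  -- inverse closure, first component
  have hinv1 : ∀ a ∈ nextCenter A Z, ∀ x : A, bstar a⁻¹ x ∈ Z := by
    intro a ha x
    have h := mul_bstar a⁻¹ a x
    rw [inv_mul_cancel, one_eq_zero, zero_bstar] at h
    have e : bstar a⁻¹ x = -(bstar a⁻¹ (bstar a x)) - bstar a x := by
      have e2 : bstar a⁻¹ x - (-(bstar a⁻¹ (bstar a x)) - bstar a x)
          = (bstar a⁻¹ (bstar a x) + bstar a x + bstar a⁻¹ x) - 0 := by abel
      rw [← h, sub_self] at e2
      exact sub_eq_zero.mp e2
    rw [e]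
    exact hsubZ.sub_mem (hsubZ.neg_mem (hZ.star_left a⁻¹ ((ha x).1))) ((ha x).1)
  have hinvadd : ∀ a ∈ nextCenter A Z, a⁻¹ + a ∈ Z := by
    intro a ha
    have h1 : bstar a⁻¹ a ∈ Z := (ha a⁻¹).2
    have e : a⁻¹ + a = -(bstar a⁻¹ a) := by
      simp only [bstar, inv_mul_cancel, one_eq_zero]; abel
    rw [e]; exact hsubZ.neg_mem h1
  have hinv : ∀ a ∈ nextCenter A Z, a⁻¹ ∈ nextCenter A Z := by
    intro a ha x
    refine ⟨hinv1 a ha x, ?_⟩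
    -- bstar x a⁻¹ ∈ Z
    have h1 : a⁻¹ - (-a) ∈ nextCenter A Z := by
      refine Z_subset_nextCenter hZ ?_
      have : a⁻¹ - (-a) = a⁻¹ + a := by abel
      rw [this]; exact hinvadd a ha
    have h2 := star_congr_right hZ x h1
    have h3 : bstar x (-a) ∈ Z := by
      rw [bstar_neg]; exact hsubZ.neg_mem ((ha x).2)
    have e : bstar x a⁻¹ = (bstar x a⁻¹ - bstar x (-a)) + bstar x (-a) := by abel
    rw [e]; exact hsubZ.add_mem h2 h3
  have hmul : ∀ a ∈ nextCenter A Z, ∀ b ∈ nextCenter A Z, a * b ∈ nextCenter A Z := by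
    intro a ha b hb x
    constructor
    · rw [mul_bstar]
      exact hsubZ.add_mem (hsubZ.add_mem (hZ.star_left a ((hb x).1)) ((hb x).1)) ((ha x).1)
    · have h1 : a * b - (a + b) ∈ nextCenter A Z := by
        refine Z_subset_nextCenter hZ ?_
        have e : a * b - (a + b) = bstar a b := by simp only [bstar]; abel
        rw [e]; exact (hb a).2
      have h2 := star_congr_right hZ x h1
      have h3 : bstar x (a + b) ∈ Z := by
        rw [bstar_add]; exact hsubZ.add_mem ((ha x).2) ((hb x).2)
      have e : bstar x (a * b) = (bstar x (a * b) - bstar x (a + b)) + bstar x (a + b) := by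
        abel
      rw [e]; exact hsubZ.add_mem h2 h3
  have hadd : ∀ a ∈ nextCenter A Z, ∀ b ∈ nextCenter A Z, a + b ∈ nextCenter A Z := by
    intro a ha b hb x
    constructor
    · have h1 : (a + b) - a * b ∈ Z := by
        have e : (a + b) - a * b = -(bstar a b) := by simp only [bstar]; abel
        rw [e]; exact hsubZ.neg_mem ((hb a).2)
      have h2 := star_congr_left hZ hZ (Z_subset_nextCenter hZ) x h1
      have h3 : bstar (a * b) x ∈ Z := (hmul a ha b hb x).1
      have e : bstar (a + b) x = (bstar (a + b) x - bstar (a * b) x) + bstar (a * b) x := by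
        abel
      rw [e]; exact hsubZ.add_mem h2 h3
    · rw [bstar_add]; exact hsubZ.add_mem ((ha x).2) ((hb x).2)
  have hneg : ∀ a ∈ nextCenter A Z, -a ∈ nextCenter A Z := by
    intro a ha x
    constructor
    · have h1 : -a - a⁻¹ ∈ Z := by
        have e : -a - a⁻¹ = -(a⁻¹ + a) := by abel
        rw [e]; exact hsubZ.neg_mem (hinvadd a ha)
      have h2 := star_congr_left hZ hZ (Z_subset_nextCenter hZ) x h1
      have h3 : bstar a⁻¹ x ∈ Z := hinv1 a ha x
      have e : bstar (-a) x = (bstar (-a) x - bstar a⁻¹ x) + bstar a⁻¹ x := by abel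
      rw [e]; exact hsubZ.add_mem h2 h3
    · rw [bstar_neg]; exact hsubZ.neg_mem ((ha x).2)
  refine ⟨Set.subset_univ _, ?_, ?_, ?_, ?_⟩
  · exact ⟨fun x => ⟨by rw [zero_bstar]; exact hsubZ.zero_mem,
      by rw [bstar_zero]; exact hsubZ.zero_mem⟩,
      fun ha hb => hadd _ ha _ hb, fun ha => hneg _ ha,
      fun ha hb => hmul _ ha _ hb, fun ha => hinv _ ha⟩
  · exact ⟨Set.mem_univ _, fun _ _ => Set.mem_univ _, fun _ => Set.mem_univ _,
      fun _ _ => Set.mem_univ _, fun _ => Set.mem_univ _⟩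
  · intro x _ z hz
    exact Z_subset_nextCenter hZ ((hz x).2)
  · intro x _ z hz
    exact Z_subset_nextCenter hZ ((hz x).1)

end LeftBrace

namespace LeftBrace

variable {A : Type u} [LeftBrace A]

lemma isSubbrace_univ : IsSubbrace (Set.univ : Set A) :=
  ⟨Set.mem_univ _, fun _ _ => Set.mem_univ _, fun _ => Set.mem_univ _,
    fun _ _ => Set.mem_univ _, fun _ => Set.mem_univ _⟩

lemma isIdeal_zero : IsIdeal ({0} : Set A) := by
  have hsub : IsSubbrace ({0} : Set A) := by
    constructor
    · rfl
    · intro x y hx hy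
      rw [Set.mem_singleton_iff] at hx hy ⊢
      rw [hx, hy, add_zero]
    · intro x hx
      rw [Set.mem_singleton_iff] at hx ⊢
      rw [hx, neg_zero]
    · intro x y hx hy
      rw [Set.mem_singleton_iff] at hx hy ⊢
      rw [hx, hy, mul_zero']
    · intro x hx
      rw [Set.mem_singleton_iff] at hx ⊢
      rw [hx, ← one_eq_zero, inv_one]
  refine ⟨Set.subset_univ _, hsub, isSubbrace_univ, ?_, ?_⟩
  · intro x _ z hz
    rw [Set.mem_singleton_iff] at hz ⊢
    rw [hz, bstar_zero]
  · intro x _ z hz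
    rw [Set.mem_singleton_iff] at hz ⊢
    rw [hz, zero_bstar]

lemma isIdeal_zetaNat : ∀ n : ℕ, IsIdeal (zetaNat A n)
  | 0 => isIdeal_zero
  | (n + 1) => isIdeal_nextCenter (isIdeal_zetaNat n)

lemma subset_braceClosure {M : Set A} : M ⊆ braceClosure M :=
  fun _x hx => Set.mem_sInter.mpr fun _S hS => hS.2 hx

lemma braceClosure_subset {M S : Set A} (hS : IsSubbrace S) (hM : M ⊆ S) :
    braceClosure M ⊆ S :=
  fun _x hx => (Set.mem_sInter.mp hx) S ⟨hS, hM⟩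

lemma isSubbrace_braceClosure {M : Set A} : IsSubbrace (braceClosure M) := by
  constructor
  · exact Set.mem_sInter.mpr fun _S hS => hS.1.zero_mem
  · intro x y hx hy
    exact Set.mem_sInter.mpr fun S hS =>
      hS.1.add_mem (Set.mem_sInter.mp hx S hS) (Set.mem_sInter.mp hy S hS)
  · intro x hx
    exact Set.mem_sInter.mpr fun S hS => hS.1.neg_mem (Set.mem_sInter.mp hx S hS)
  · intro x y hx hy
    exact Set.mem_sInter.mpr fun S hS =>
      hS.1.mul_mem (Set.mem_sInter.mp hx S hS) (Set.mem_sInter.mp hy S hS)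
  · intro x hx
    exact Set.mem_sInter.mpr fun S hS => hS.1.inv_mem (Set.mem_sInter.mp hx S hS)

lemma mul_sub_mul_left {Z : Set A} (hZ : IsIdeal Z) (c : A) {s t : A}
    (h : s - t ∈ Z) : c * s - c * t ∈ Z := by
  have key : c * (t + (s - t)) - c * t = bstar c (s - t) + (s - t) := by
    rw [mul_add_eq]; simp only [bstar]; abel
  have e : t + (s - t) = s := by abel
  rw [e] at key
  rw [key]
  exact hZ.subbrace.add_mem (hZ.star_left c h) h

lemma mul_sub_mul_right {Z : Set A} (hZ : IsIdeal Z) (c : A) {s t : A}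
    (h : s - t ∈ Z) : s * c - t * c ∈ Z := by
  obtain ⟨z, hz, rfl⟩ := exists_mul_of_sub_mem hZ h
  rw [mul_assoc]
  apply mul_sub_mul_left hZ t
  have e : z * c - c = bstar z c + z := by simp only [bstar]; abel
  rw [e]
  exact hZ.subbrace.add_mem (hZ.star_right c hz) hz

/-- `B + Z`, as a set. -/
def braceSum (B Z : Set A) : Set A := {x : A | ∃ b ∈ B, x - b ∈ Z}

end LeftBrace



open LeftBrace in
/-- **Lemma.** In a T-brace `A`, for every natural `n` and every `a ∈ ζ_n(⋆,A)`,
the subbrace `br(a)` generated by `a` is an ideal of `A`. -/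
theorem braceClosure_isIdeal_of_mem_zetaNat
    {A : Type u} [LeftBrace A] (hT : IsTBrace A) (n : ℕ) (a : A)
    (ha : a ∈ zetaNat A n) :
    IsIdeal (braceClosure {a}) := by
  have hZideal : ∀ k : ℕ, IsIdeal (zetaNat A k) := isIdeal_zetaNat
  set B : Set A := braceClosure {a} with hBdef
  have hBsub : IsSubbrace B := isSubbrace_braceClosure
  have hz0 : zetaNat A 0 = ({0} : Set A) := rfl
  have hz1 : ∀ k : ℕ, zetaNat A (k + 1) = nextCenter A (zetaNat A k) := fun _ => rfl
  have hB0 : braceSum B (zetaNat A 0) = B := by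
    ext x
    constructor
    · rintro ⟨b, hb, hxb⟩
      rw [hz0, Set.mem_singleton_iff, sub_eq_zero] at hxb
      rwa [hxb]
    · intro hx
      exact ⟨x, hx, by rw [sub_self, hz0]; rfl⟩
  have hBn : braceSum B (zetaNat A n) = zetaNat A n := by
    have hBsubZ : B ⊆ zetaNat A n := by
      apply braceClosure_subset (hZideal n).subbrace
      intro x hx
      rw [Set.mem_singleton_iff] at hx
      rwa [hx]
    ext x
    constructor
    · rintro ⟨b, hb, hxb⟩
      have h2 := (hZideal n).subbrace.add_mem hxb (hBsubZ hb)
      rwa [sub_add_cancel] at h2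
    · intro hx
      exact ⟨0, hBsub.zero_mem, by rwa [sub_zero]⟩
  have hsubk : ∀ k, IsSubbrace (braceSum B (zetaNat A k)) := by
    intro k
    have hZs := (hZideal k).subbrace
    constructor
    · exact ⟨0, hBsub.zero_mem, by rw [sub_zero]; exact hZs.zero_mem⟩
    · rintro x y ⟨b, hb, hxb⟩ ⟨c, hc, hyc⟩
      refine ⟨b + c, hBsub.add_mem hb hc, ?_⟩
      have e : x + y - (b + c) = (x - b) + (y - c) := by abel
      rw [e]
      exact hZs.add_mem hxb hyc
    · rintro x ⟨b, hb, hxb⟩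
      refine ⟨-b, hBsub.neg_mem hb, ?_⟩
      have e : -x - -b = -(x - b) := by abel
      rw [e]
      exact hZs.neg_mem hxb
    · rintro x y ⟨b, hb, hxb⟩ ⟨c, hc, hyc⟩
      refine ⟨b * c, hBsub.mul_mem hb hc, ?_⟩
      have e : x * y - b * c = (x * y - x * c) + (x * c - b * c) := by abel
      rw [e]
      exact hZs.add_mem (mul_sub_mul_left (hZideal k) x hyc)
        (mul_sub_mul_right (hZideal k) c hxb)
    · rintro x ⟨b, hb, hxb⟩
      refine ⟨b⁻¹, hBsub.inv_mem hb, ?_⟩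
      obtain ⟨z, hz, rfl⟩ := exists_mul_of_sub_mem (hZideal k) hxb
      rw [mul_inv_rev]
      have h2 : z⁻¹ * b⁻¹ - 0 * b⁻¹ ∈ zetaNat A k := by
        apply mul_sub_mul_right (hZideal k) b⁻¹
        rw [sub_zero]
        exact hZs.inv_mem hz
      rwa [zero_mul'] at h2
  have hstep : ∀ k, IsIdealIn (braceSum B (zetaNat A k)) (braceSum B (zetaNat A (k + 1))) := by
    intro k
    have hZk := hZideal k
    have hNCk : IsIdeal (nextCenter A (zetaNat A k)) := hZideal (k + 1)
    refine ⟨?_, hsubk k, hsubk (k + 1), ?_, ?_⟩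
    · rintro x ⟨b, hb, hxb⟩
      exact ⟨b, hb, Z_subset_nextCenter hZk hxb⟩
    · rintro w ⟨b', hb', hwb'⟩ z ⟨b, hb, hzb⟩
      refine ⟨bstar b' b, hBsub.bstar_mem hb' hb, ?_⟩
      have h1 : bstar w z - bstar b' z ∈ zetaNat A k :=
        star_congr_left hZk hNCk (fun _ hx => hx) z hwb'
      have h2 : bstar b' z - bstar b' b ∈ zetaNat A k :=
        star_congr_right hZk b' (Z_subset_nextCenter hZk hzb)
      have e : bstar w z - bstar b' b
          = (bstar w z - bstar b' z) + (bstar b' z - bstar b' b) := by abel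
      rw [e]
      exact hZk.subbrace.add_mem h1 h2
    · rintro w ⟨b', hb', hwb'⟩ z ⟨b, hb, hzb⟩
      refine ⟨bstar b b', hBsub.bstar_mem hb hb', ?_⟩
      have h1 : bstar z w - bstar b w ∈ zetaNat A k :=
        star_congr_left hZk hZk (Z_subset_nextCenter hZk) w hzb
      have h2 : bstar b w - bstar b b' ∈ zetaNat A k :=
        star_congr_right hZk b hwb'
      have e : bstar z w - bstar b b'
          = (bstar z w - bstar b w) + (bstar b w - bstar b b') := by abel
      rw [e]
      exact hZk.subbrace.add_mem h1 h2
  have key : ∀ j : ℕ, IsIdeal (braceSum B (zetaNat A (n - j))) := by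
    intro j
    induction j with
    | zero =>
      rw [Nat.sub_zero, hBn]
      exact hZideal n
    | succ j ih =>
      rcases le_or_gt n j with hj | hj
      · have e : n - (j + 1) = n - j := by omega
        rw [e]
        exact ih
      · have e : n - j = (n - (j + 1)) + 1 := by omega
        rw [e] at ih
        exact hT _ _ (hstep (n - (j + 1))) ih
  have hfin := key n
  rwa [Nat.sub_self, hB0] at hfin
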